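/- ω₁ = 𝔠 holds if and only if every first-countable Tychonoff space of weight < 𝔠 embeds into a Hausdorff first-countable compact space. -/

import Mathlib

open Cardinal Set Filter Topology TopologicalSpace

/-- `A` is almost contained in `B`. -/
def almSub (A B : Set ℕ) : Prop := (A \ B).Finite

/-- `f ≤* g`: eventual domination. -/
def evLE (f g : ℕ → ℕ) : Prop := {n : ℕ | g n < f n}.Finite

/-- A splitting family on `ω`. -/
def IsSplittingFamily (S : Set (Set ℕ)) : Prop :=
  ∀ A : Set ℕ, A.Infinite → ∃ s ∈ S, (A ∩ s).Infinite ∧ (A \ s).Infinite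

/-- The splitting number `𝔰`. -/
noncomputable def sNum : Cardinal :=
  sInf {c | ∃ S : Set (Set ℕ), IsSplittingFamily S ∧ #S = c}

/-- An `≤*`-unbounded family. -/
def IsUnboundedFamily (F : Set (ℕ → ℕ)) : Prop :=
  ∀ g : ℕ → ℕ, ∃ f ∈ F, ¬ evLE f g

/-- The bounding number `𝔟`. -/
noncomputable def bNum : Cardinal :=
  sInf {c | ∃ F : Set (ℕ → ℕ), IsUnboundedFamily F ∧ #F = c}

/-- The weight of a topological space. -/
noncomputable def wt (X : Type*) [TopologicalSpace X] : Cardinal :=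
  sInf {c | ∃ B : Set (Set X), IsTopologicalBasis B ∧ #B = c}

/-- Zero-dimensional: there is a base of clopen sets. -/
def ZeroDim (X : Type*) [TopologicalSpace X] : Prop :=
  ∃ B : Set (Set X), IsTopologicalBasis B ∧ ∀ s ∈ B, IsClopen s

/-- Countably compact in the sense of the paper: every closed discrete subset is finite. -/
def CtblCompact (X : Type*) [TopologicalSpace X] : Prop :=
  ∀ A : Set X, IsClosed A → DiscreteTopology A → A.Finite

/-- Feebly compact: every locally finite family of nonempty open sets is finite. -/
def FeeblyCompact (X : Type*) [TopologicalSpace X] : Prop :=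
  ∀ F : Set (Set X), (∀ u ∈ F, IsOpen u ∧ u.Nonempty) →
    LocallyFinite (fun u : F => (u : Set X)) → F.Finite

/-- Pseudocompact: Tychonoff and every continuous real-valued function is bounded. -/
def Pseudocompact (X : Type*) [TopologicalSpace X] : Prop :=
  T35Space X ∧ ∀ f : X → ℝ, Continuous f → ∃ M : ℝ, ∀ x, |f x| ≤ M

/-- Pseudonormal space. -/
def Pseudonormal (X : Type*) [TopologicalSpace X] : Prop :=
  ∀ F₀ F₁ : Set X, IsClosed F₀ → IsClosed F₁ → F₀.Countable → Disjoint F₀ F₁ →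
    ∃ U₀ U₁ : Set X, IsOpen U₀ ∧ IsOpen U₁ ∧ F₀ ⊆ U₀ ∧ F₁ ⊆ U₁ ∧ Disjoint U₀ U₁

/-- The Pixley–Roy topology on the finite subsets of `X`. -/
def PRtop (X : Type*) [TopologicalSpace X] : TopologicalSpace (Finset X) :=
  TopologicalSpace.generateFrom
    {t | ∃ (F : Finset X) (U : Set X), IsOpen U ∧
      t = {A : Finset X | F ⊆ A ∧ (A : Set X) ⊆ U}}

/-- A subspace of the Cantor space is a λ-set if each of its countable subsets is Gδ in it. -/
def IsLambdaSet (X : Set (ℕ → Bool)) : Prop :=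
  ∀ C : Set X, C.Countable → IsGδ C

/-! ### Auxiliary lemmas -/

theorem aux_aleph_one_eq_continuum_iff :
    (Cardinal.aleph.{u} 1 = Cardinal.continuum.{u}) ↔
    (Cardinal.aleph.{0} 1 = Cardinal.continuum.{0}) := by
  rw [← Cardinal.lift_inj.{0, u} (a := Cardinal.aleph.{0} 1),
    Cardinal.lift_aleph, Cardinal.lift_continuum, Ordinal.lift_one]


section HilbertCube

/-- Every second-countable T3 space embeds into the Hilbert cube. -/
theorem aux_embed_cube (X : Type) [TopologicalSpace X] [T3Space X] [SecondCountableTopology X] :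
    ∃ f : X → (ℕ → Set.Icc (0:ℝ) 1), IsEmbedding f := by
  by_cases hX : Nonempty X
  · letI m : MetricSpace X := TopologicalSpace.metrizableSpaceMetric X
    obtain ⟨u, hu⟩ := TopologicalSpace.exists_dense_seq X
    set g : X → ℕ → ℝ := fun x n => min (dist x (u n)) 1 with hgdef
    have hg01 : ∀ x n, g x n ∈ Set.Icc (0:ℝ) 1 :=
      fun x n => ⟨le_min dist_nonneg zero_le_one, min_le_right _ _⟩
    set f : X → ℕ → Set.Icc (0:ℝ) 1 := fun x n => ⟨g x n, hg01 x n⟩ with hfdef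
    have hcont : Continuous f := by
      refine continuous_pi fun n => Continuous.subtype_mk ?_ _
      exact (continuous_id.dist continuous_const).min continuous_const
    have key : ∀ (x y : X) (ε : ℝ), 0 < ε → ε ≤ 1/3 →
        ∀ n, dist x (u n) < ε → |g y n - g x n| < ε → dist x y < 3 * ε := by
      intro x y ε hε hε3 n hn hmin
      have h1 : g x n = dist x (u n) := min_eq_left (by linarith)
      rw [h1] at hmin
      have habs := abs_lt.1 hmin
      have h2 : g y n < 2 * ε := by linarith [habs.2]
      have h3 : g y n = dist y (u n) := by
        rcases min_cases (dist y (u n)) 1 with ⟨he, _⟩ | ⟨he, hle⟩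
        · exact he
        · exfalso; rw [hgdef] at h2; simp only at h2; rw [he] at h2; linarith
      rw [h3] at habs
      have := dist_triangle x (u n) y
      rw [dist_comm (u n) y] at this
      linarith [habs.2]
    have hinj : Function.Injective f := by
      intro x y hxy
      have hg : ∀ n, g x n = g y n := by
        intro n
        have := congrFun hxy n
        simpa [hfdef, Subtype.ext_iff] using this
      have hdist : ∀ ε : ℝ, 0 < ε → dist x y ≤ ε := by
        intro ε hε
        have hδ : (0:ℝ) < min (ε/3) (1/3) := by positivity
        obtain ⟨n, hn⟩ := hu.exists_dist_lt x hδ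
        have h0 : |g y n - g x n| < min (ε/3) (1/3) := by
          rw [hg n]; simpa using hδ
        have h4 := key x y _ hδ (min_le_right _ _) n hn h0
        have h5 : dist x y < ε := by
          have h6 := min_le_left (ε/3) (1/3); linarith
        exact h5.le
      have : dist x y ≤ 0 := le_of_forall_pos_le_add (by
        intro ε hε; simpa using hdist ε hε)
      exact eq_of_dist_eq_zero (le_antisymm this dist_nonneg)
    refine ⟨f, isInducing_iff_nhds.2 fun x => le_antisymm (hcont.tendsto x).le_comap ?_, hinj⟩
    refine (Metric.nhds_basis_ball.ge_iff).2 fun ε hε => ?_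
    have hδ : (0:ℝ) < min (ε/3) (1/3) := by positivity
    obtain ⟨n, hn⟩ := hu.exists_dist_lt x hδ
    refine Filter.mem_comap.2 ⟨(fun v : ℕ → Set.Icc (0:ℝ) 1 => (v n : ℝ)) ⁻¹'
      Metric.ball (g x n) (min (ε/3) (1/3)), ?_, ?_⟩
    · refine IsOpen.mem_nhds (Metric.isOpen_ball.preimage ?_) ?_
      · exact continuous_subtype_val.comp (continuous_apply n)
      · simpa [hfdef] using hδ
    · intro y hy
      simp only [Set.mem_preimage, Metric.mem_ball, hfdef] at hy
      have h0 : |g y n - g x n| < min (ε/3) (1/3) := by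
        simpa [Real.dist_eq] using hy
      have := key x y _ hδ (min_le_right _ _) n hn h0
      have hmem : dist x y < ε := by
        calc dist x y < 3 * min (ε/3) (1/3) := this
          _ ≤ 3 * (ε/3) := by have := min_le_left (ε/3) (1/3); linarith
          _ = ε := by ring
      simpa [Metric.mem_ball, dist_comm] using hmem
  · have hXe : IsEmpty X := not_nonempty_iff.1 hX
    have hsub : Subsingleton (TopologicalSpace X) := ⟨fun t1 t2 => by
      apply TopologicalSpace.ext
      funext s
      rw [Set.eq_empty_of_isEmpty s]
      exact propext (iff_of_true (@isOpen_empty _ t1) (@isOpen_empty _ t2))⟩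
    exact ⟨fun x => hXe.elim x, ⟨@Subsingleton.elim _ hsub _ _⟩, fun a => hXe.elim a⟩

end HilbertCube

section Omega1

/-- The space `ω₁`. -/
noncomputable abbrev W : Type := (Cardinal.aleph 1).ord.ToType

noncomputable instance : TopologicalSpace W := Preorder.topology W

instance : OrderTopology W := ⟨rfl⟩

theorem W_card : #W = Cardinal.aleph 1 := Cardinal.mk_ord_toType _

instance : Nonempty W := by
  rw [← Cardinal.mk_ne_zero_iff, W_card]
  exact (Cardinal.aleph0_pos.trans_le (Cardinal.aleph0_le_aleph 1)).ne'

instance : NoMaxOrder W := Cardinal.noMaxOrder (Cardinal.aleph0_le_aleph 1)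

theorem W_Iio_countable (x : W) : (Set.Iio x).Countable :=
  (Cardinal.countable_iff_lt_aleph_one _).2 (Cardinal.mk_Iio_ord_toType x)

theorem W_succ (x : W) : ∃ z : W, x < z ∧ Set.Iio z = Set.Iic x := by
  obtain ⟨z0, hz0⟩ := exists_gt x
  have hne : (Set.Ioi x).Nonempty := ⟨z0, hz0⟩
  refine ⟨wellFounded_lt.min (Set.Ioi x) hne, wellFounded_lt.min_mem _ _, ?_⟩
  ext w
  constructor
  · intro hw
    by_contra hxw
    exact (wellFounded_lt.not_lt_min (Set.Ioi x) (Set.mem_Ioi.2 (not_le.1 (show ¬ w ≤ x from hxw)))) hw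
  · intro hw
    exact lt_of_le_of_lt hw (Set.mem_Ioi.1 (wellFounded_lt.min_mem (Set.Ioi x) hne))

instance : FirstCountableTopology W := by
  constructor
  intro x
  rw [nhds_eq_order]
  obtain ⟨z, hz, hIio⟩ := W_succ x
  have h2 : (⨅ b ∈ Set.Ioi x, 𝓟 (Set.Iio b)) = 𝓟 (Set.Iic x) := by
    refine le_antisymm (iInf₂_le_of_le z hz (by rw [hIio])) ?_
    exact le_iInf₂ fun b hb => Filter.principal_mono.2 fun w hw => Set.mem_Iio.2 (lt_of_le_of_lt (Set.mem_Iic.1 hw) hb)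
  have h1 : (⨅ b ∈ Set.Iio x, 𝓟 (Set.Ioi b)) = ⨅ s ∈ Set.Ioi '' Set.Iio x, 𝓟 s := by
    rw [iInf_image]
  rw [h2, h1]
  haveI := Filter.isCountablyGenerated_biInf_principal ((W_Iio_countable x).image Set.Ioi)
  exact Filter.Inf.isCountablyGenerated _ _

instance : T35Space W := inferInstance

theorem aux_list_of_finite_subset {α : Type*} {S f : Set α} (hf : f.Finite) (hsub : f ⊆ S) :
    ∃ l : List ↥S, (Subtype.val '' {a : ↥S | a ∈ l}) = f := by
  refine ⟨hf.toFinset.attach.toList.map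
    (fun a => (⟨a.1, hsub ((Set.Finite.mem_toFinset hf).1 a.2)⟩ : ↥S)), ?_⟩
  ext b
  simp only [Set.mem_image, Set.mem_setOf_eq, List.mem_map, Finset.mem_toList,
    Finset.mem_attach, true_and]
  constructor
  · rintro ⟨a, ⟨c, rfl⟩, rfl⟩
    exact (Set.Finite.mem_toFinset hf).1 c.2
  · intro hb
    exact ⟨⟨b, hsub hb⟩, ⟨⟨b, (Set.Finite.mem_toFinset hf).2 hb⟩, rfl⟩, rfl⟩

theorem W_wt : wt W ≤ Cardinal.aleph 1 := by
  classical
  set S : Set (Set W) := {s | ∃ a : W, s = Set.Ioi a ∨ s = Set.Iio a} with hSdef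
  have hgen : (inferInstance : TopologicalSpace W) = TopologicalSpace.generateFrom S :=
    OrderTopology.topology_eq_generate_intervals
  have hB := TopologicalSpace.isTopologicalBasis_of_subbasis hgen
  set B : Set (Set W) := (fun f => ⋂₀ f) '' { f : Set (Set W) | f.Finite ∧ f ⊆ S } with hBdef
  have hle : wt W ≤ #B := csInf_le' ⟨B, hB, rfl⟩
  -- surjection from lists
  have hsurj : Function.Surjective (fun l : List ↥S =>
      (⟨⋂₀ (Subtype.val '' {a : ↥S | a ∈ l}),
        ⟨Subtype.val '' {a : ↥S | a ∈ l},
          ⟨(l.finite_toSet.image _), by rintro _ ⟨a, _, rfl⟩; exact a.2⟩, rfl⟩⟩ : ↥B)) := by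
    rintro ⟨b, f0, ⟨hfin, hsub⟩, rfl⟩
    obtain ⟨l, hl⟩ := aux_list_of_finite_subset hfin hsub
    exact ⟨l, by simp only [Subtype.mk.injEq, hl]⟩
  have hcard1 : #B ≤ #(List ↥S) := Cardinal.mk_le_of_surjective hsurj
  have hScard : #(↥S) ≤ Cardinal.aleph 1 := by
    have hsurj2 : Function.Surjective (fun p : W × Bool =>
        (⟨if p.2 then Set.Ioi p.1 else Set.Iio p.1,
          ⟨p.1, by cases hb : p.2 <;> simp [hb]⟩⟩ : ↥S)) := by
      rintro ⟨s, a, (rfl | rfl)⟩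
      · exact ⟨(a, true), by simp⟩
      · exact ⟨(a, false), by simp⟩
    have := Cardinal.mk_le_of_surjective hsurj2
    refine this.trans ?_
    rw [Cardinal.mk_prod, Cardinal.lift_id, Cardinal.lift_id, W_card]
    calc Cardinal.aleph 1 * #Bool ≤ Cardinal.aleph 1 * Cardinal.aleph 1 :=
          by gcongr; exact le_trans Cardinal.mk_le_aleph0 (Cardinal.aleph0_le_aleph 1)
      _ = Cardinal.aleph 1 := Cardinal.mul_eq_self (Cardinal.aleph0_le_aleph 1)
  refine hle.trans (hcard1.trans ?_)
  refine (Cardinal.mk_list_le_max _).trans ?_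
  exact max_le (Cardinal.aleph0_le_aleph 1) hScard

end Omega1

/-- `ω₁ = 𝔠` iff every first-countable Tychonoff space of weight `< 𝔠`
embeds into a Hausdorff first-countable compact space. -/
theorem stmt_12 :
    aleph 1 = Cardinal.continuum ↔
    ∀ (X : Type) [TopologicalSpace X] [T35Space X] [FirstCountableTopology X],
      wt X < Cardinal.continuum →
      ∃ (Y : Type) (_ : TopologicalSpace Y),
        T2Space Y ∧ FirstCountableTopology Y ∧ CompactSpace Y ∧
        ∃ f : X → Y, IsEmbedding f := by
  constructor
  · -- Forward: CH implies embeddability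
    intro h X _ _ _ hwt
    have hne : {c | ∃ B : Set (Set X), IsTopologicalBasis B ∧ #B = c}.Nonempty :=
      ⟨_, _, isTopologicalBasis_opens, rfl⟩
    obtain ⟨B, hB, hBcard⟩ := csInf_mem hne
    have h0 : Cardinal.aleph.{0} 1 = Cardinal.continuum.{0} :=
      aux_aleph_one_eq_continuum_iff.1 h
    have hBlt : #B < Cardinal.aleph 1 := by
      rw [hBcard, h0]; exact hwt
    have hBc : B.Countable := (Cardinal.countable_iff_lt_aleph_one _).2 hBlt
    haveI : SecondCountableTopology X := hB.secondCountableTopology hBc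
    obtain ⟨f, hf⟩ := aux_embed_cube X
    exact ⟨ℕ → Set.Icc (0:ℝ) 1, inferInstance, inferInstance, inferInstance, inferInstance,
      f, hf⟩
  · -- Reverse
    intro hyp
    by_contra hne
    have hne0 : Cardinal.aleph.{0} 1 ≠ Cardinal.continuum.{0} :=
      fun hc => hne (aux_aleph_one_eq_continuum_iff.2 hc)
    have hlt : Cardinal.aleph.{0} 1 < Cardinal.continuum.{0} :=
      lt_of_le_of_ne Cardinal.aleph_one_le_continuum hne0
    obtain ⟨Y, tY, hT2, hFC, hComp, e, he⟩ := hyp W (lt_of_le_of_lt W_wt hlt)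
    letI := tY
    haveI := hT2; haveI := hFC; haveI := hComp
    set K : W → Set Y := fun b => closure (e '' Set.Ioi b) with hKdef
    have hKdir : Directed (· ⊇ ·) K := by
      intro a b
      refine ⟨max a b, ?_, ?_⟩
      · exact closure_mono (Set.image_mono (Set.Ioi_subset_Ioi (le_max_left a b)))
      · exact closure_mono (Set.image_mono (Set.Ioi_subset_Ioi (le_max_right a b)))
    have hKne : ∀ b, (K b).Nonempty := by
      intro b
      obtain ⟨z, hz⟩ := exists_gt b
      exact ⟨e z, subset_closure ⟨z, hz, rfl⟩⟩
    obtain ⟨y, hy⟩ := IsCompact.nonempty_iInter_of_directed_nonempty_isCompact_isClosed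
      K hKdir hKne (fun b => isClosed_closure.isCompact) (fun b => isClosed_closure)
    have hy' : ∀ b : W, y ∈ closure (e '' Set.Ioi b) := fun b => Set.mem_iInter.1 hy b
    obtain ⟨U, hU⟩ := (𝓝 y).exists_antitone_basis
    have key : ∀ (b : W) (n : ℕ), ∃ z : W, b < z ∧ e z ∈ U n := by
      intro b n
      have hUn : U n ∈ 𝓝 y := hU.1.mem_of_mem trivial
      obtain ⟨p, hp1, z, hz, rfl⟩ := mem_closure_iff_nhds.1 (hy' b) (U n) hUn
      exact ⟨z, hz, hp1⟩
    choose g hg1 hg2 using key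
    obtain ⟨b0⟩ : Nonempty W := inferInstance
    set x : ℕ → W := fun n => Nat.rec (g b0 0) (fun n xn => g xn (n+1)) n with hxdef
    have hx0 : ∀ n, e (x n) ∈ U n := by
      intro n
      cases n with
      | zero => exact hg2 b0 0
      | succ m => exact hg2 (x m) (m+1)
    have hmono : StrictMono x := strictMono_nat_of_lt_succ (fun n => hg1 (x n) (n+1))
    have hbdd : BddAbove (Set.range x) := by
      by_contra hbd
      have hcover : (Set.univ : Set W) ⊆ ⋃ n, Set.Iio (x n) := by
        intro b _
        obtain ⟨_, ⟨n, rfl⟩, hlt'⟩ := not_bddAbove_iff.1 hbd b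
        exact Set.mem_iUnion.2 ⟨n, hlt'⟩
      have hcnt : (Set.univ : Set W).Countable :=
        Set.Countable.mono hcover (Set.countable_iUnion fun n => W_Iio_countable (x n))
      haveI : Countable W := Set.countable_univ_iff.1 hcnt
      have : #W ≤ Cardinal.aleph0 := Cardinal.mk_le_aleph0
      rw [W_card] at this
      exact absurd this (not_le.2 Cardinal.aleph0_lt_aleph_one)
    set α : W := wellFounded_lt.min (upperBounds (Set.range x)) hbdd with hαdef
    have hlub : IsLUB (Set.range x) α :=
      ⟨wellFounded_lt.min_mem _ _,
        fun b hb => not_lt.1 (wellFounded_lt.not_lt_min _ hb)⟩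
    have htend1 : Tendsto x atTop (𝓝 α) := tendsto_atTop_isLUB hmono.monotone hlub
    have htend2 : Tendsto (fun n => e (x n)) atTop (𝓝 (e α)) :=
      (he.continuous.tendsto α).comp htend1
    have htend3 : Tendsto (fun n => e (x n)) atTop (𝓝 y) := hU.tendsto hx0
    have hy_eq : e α = y := tendsto_nhds_unique htend2 htend3
    obtain ⟨z, hz, hIio⟩ := W_succ α
    have hop : IsOpen (Set.Iic α) := by rw [← hIio]; exact isOpen_Iio
    obtain ⟨V, hVopen, hVpre⟩ := he.isInducing.isOpen_iff.1 hop
    have hyV : y ∈ V := by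
      rw [← hy_eq]
      have : α ∈ e ⁻¹' V := by rw [hVpre]; exact Set.mem_Iic.2 le_rfl
      exact this
    obtain ⟨p, hpV, w, hw, rfl⟩ := mem_closure_iff_nhds.1 (hy' α) V (hVopen.mem_nhds hyV)
    have hwle : w ∈ Set.Iic α := by rw [← hVpre]; exact hpV
    exact absurd (Set.mem_Ioi.1 hw) (not_lt.2 hwle)
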